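/- arXiv:2202.02322 — 3 statements merged into one kernel-verified Lean document; each statement's English description precedes it below -/
import Mathlib

section
/- Let G be a finite group and p a prime divisor of the order of G. If every maximal subgroup of G is normal in G or has p'-order, then for every prime divisor q of the order of G, G is either q-nilpotent or q-closed. -/
universe u

/-- Pulling back a coatom along a surjective homomorphism gives a coatom. -/
private lemma isCoatom_comap_of_surjective {H H' : Type*} [Group H] [Group H']
    {f : H →* H'} (hf : Function.Surjective f) {M : Subgroup H'} (hM : IsCoatom M) :
    IsCoatom (M.comap f) := by
  have hker : f.ker ≤ M.comap f := fun x hx =>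
    Subgroup.mem_comap.mpr (by rw [MonoidHom.mem_ker.mp hx]; exact M.one_mem)
  constructor
  · intro ht
    apply hM.1
    have := Subgroup.map_comap_eq_self_of_surjective hf M
    rw [ht, Subgroup.map_top_of_surjective f hf] at this
    exact this.symm
  · intro K hK
    have hkerK : f.ker ≤ K := le_trans hker hK.le
    have hKeq : Subgroup.comap f (Subgroup.map f K) = K := by
      rw [Subgroup.comap_map_eq f K, sup_eq_left.mpr hkerK]
    have hMle : M ≤ K.map f := by
      rw [← Subgroup.map_comap_eq_self_of_surjective hf M]
      exact Subgroup.map_mono hK.le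
    have hMlt : M < K.map f := by
      refine lt_of_le_of_ne hMle fun hEq => ?_
      exact absurd (by rw [← hKeq, ← hEq]) hK.ne'
    have : K.map f = ⊤ := hM.2 _ hMlt
    rw [← hKeq, this, Subgroup.comap_top]

/-- If `q` does not divide the order of the kernel nor the order of `K'`,
then it does not divide the order of the preimage of `K'`. -/
private lemma not_dvd_card_comap {H H' : Type*} [Group H] [Group H'] [Finite H]
    (f : H →* H') {q : ℕ} (hq : q.Prime) (hker : ¬ q ∣ Nat.card f.ker)
    {K' : Subgroup H'} (hK' : ¬ q ∣ Nat.card K') : ¬ q ∣ Nat.card (K'.comap f) := by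
  intro hd
  haveI : Fact q.Prime := ⟨hq⟩
  obtain ⟨g, hg⟩ := exists_prime_orderOf_dvd_card' (G := K'.comap f) q hd
  have hx : orderOf (g : H) = q := by rw [Subgroup.orderOf_coe, hg]
  have hfx : orderOf (f (g : H)) ∣ q := hx ▸ orderOf_map_dvd f (g : H)
  rcases (Nat.Prime.eq_one_or_self_of_dvd hq _ hfx) with h1 | h1
  · -- f g = 1, so g ∈ ker f, so q ∣ card ker
    have : (g : H) ∈ f.ker := MonoidHom.mem_ker.mpr (orderOf_eq_one_iff.mp h1)
    exact hker (hx ▸ Subgroup.orderOf_dvd_natCard f.ker this)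
  · -- f g ∈ K' has order q, so q ∣ card K'
    have hmem : f (g : H) ∈ K' := g.2
    exact hK' (h1 ▸ Subgroup.orderOf_dvd_natCard K' hmem)

/-- In a finite group in which every maximal subgroup is normal,
every Sylow subgroup is normal (Frattini argument). -/
private lemma sylow_normal_of_coatoms_normal {H : Type*} [Group H] [Finite H]
    (hn : ∀ M : Subgroup H, IsCoatom M → M.Normal) {q : ℕ} [Fact q.Prime]
    (Q : Sylow q H) : (Q : Subgroup H).Normal := by
  by_contra hQ
  have h1 : Subgroup.normalizer ((Q : Subgroup H) : Set H) ≠ ⊤ := fun ht =>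
    hQ (Subgroup.normalizer_eq_top_iff.mp ht)
  rcases eq_top_or_exists_le_coatom (Subgroup.normalizer ((Q : Subgroup H) : Set H)) with ht | ⟨M, hM, hle⟩
  · exact h1 ht
  · haveI := hn M hM
    have hPM : (Q : Subgroup H) ≤ M := le_trans Subgroup.le_normalizer hle
    have := Sylow.normalizer_sup_eq_top' (N := M) Q hPM
    rw [← Sylow.coe_coe, sup_eq_right.mpr hle] at this
    exact hM.1 this

/-- A finite group in which every maximal subgroup is normal has a normal
`q`-complement for every prime `q`. -/
private lemma exists_q_complement {q : ℕ} (hq : q.Prime) :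
    ∀ (n : ℕ) (H : Type u) (_ : Group H) (_ : Finite H), Nat.card H ≤ n →
    (∀ M : Subgroup H, IsCoatom M → M.Normal) →
    ∃ K : Subgroup H, K.Normal ∧ ¬ q ∣ Nat.card K ∧ ∃ m : ℕ, K.index = q ^ m := by
  intro n
  induction n with
  | zero =>
    intro H _ _ hcard _
    exact absurd (Nat.le_zero.mp hcard) Nat.card_pos.ne'
  | succ n ih =>
    intro H _ _ hcard hn
    by_cases hqH : q ∣ Nat.card H
    · by_cases hr : ∃ r : ℕ, r.Prime ∧ r ≠ q ∧ r ∣ Nat.card H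
      · obtain ⟨r, hr, hrq, hrH⟩ := hr
        haveI : Fact r.Prime := ⟨hr⟩
        obtain ⟨R⟩ := (inferInstance : Nonempty (Sylow r H))
        haveI hRn : (R : Subgroup H).Normal := sylow_normal_of_coatoms_normal hn R
        have hcardR : Nat.card (R : Subgroup H) = r ^ (Nat.card H).factorization r :=
          Sylow.card_eq_multiplicity R
        have hRpos : 1 < Nat.card (R : Subgroup H) := by
          rw [hcardR]
          exact Nat.one_lt_pow (Nat.Prime.factorization_pos_of_dvd hr
            Nat.card_pos.ne' hrH).ne' hr.one_lt
        -- the quotient is smaller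
        have hquot : Nat.card (H ⧸ (R : Subgroup H)) ≤ n := by
          have heq := Subgroup.card_eq_card_quotient_mul_card_subgroup (R : Subgroup H)
          have : Nat.card (H ⧸ (R : Subgroup H)) < Nat.card H := by
            rw [heq]
            exact (Nat.lt_mul_iff_one_lt_right Nat.card_pos).mpr hRpos
          omega
        -- coatoms of the quotient are normal
        have hn' : ∀ M : Subgroup (H ⧸ (R : Subgroup H)), IsCoatom M → M.Normal := by
          intro M' hM'
          have hsurj : Function.Surjective (QuotientGroup.mk' (R : Subgroup H)) :=
            QuotientGroup.mk'_surjective _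
          have hco : IsCoatom (M'.comap (QuotientGroup.mk' (R : Subgroup H))) :=
            isCoatom_comap_of_surjective hsurj hM'
          have := hn _ hco
          have hmap := Subgroup.Normal.map this (QuotientGroup.mk' (R : Subgroup H)) hsurj
          rwa [Subgroup.map_comap_eq_self_of_surjective hsurj M'] at hmap
        obtain ⟨K', hK'n, hK'c, m, hK'i⟩ :=
          ih (H ⧸ (R : Subgroup H)) inferInstance inferInstance hquot hn'
        refine ⟨K'.comap (QuotientGroup.mk' (R : Subgroup H)),
          Subgroup.Normal.comap hK'n _, ?_, m, ?_⟩
        · apply not_dvd_card_comap _ hq _ hK'c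
          rw [QuotientGroup.ker_mk']
          intro hdvd
          rw [hcardR] at hdvd
          exact hrq ((Nat.prime_dvd_prime_iff_eq hq hr).mp (hq.dvd_of_dvd_pow hdvd)).symm
        · rw [Subgroup.index_comap_of_surjective _ (QuotientGroup.mk'_surjective _), hK'i]
      · -- H is a q-group
        push_neg at hr
        refine ⟨⊥, inferInstance, ?_, ?_⟩
        · rw [Subgroup.card_bot]
          exact hq.not_dvd_one
        · refine ⟨(Nat.card H).primeFactorsList.length, ?_⟩
          rw [Subgroup.index_bot]
          exact Nat.eq_prime_pow_of_unique_prime_dvd Nat.card_pos.ne'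
            (fun {d} hd hdvd => by
              by_contra hne
              exact hne (False.elim (hr d hd hne hdvd)))
    · exact ⟨⊤, inferInstance, by rwa [Subgroup.card_top], 0, by rw [pow_zero, Subgroup.index_top]⟩

/-- Theorem 1.10: If every maximal subgroup of a finite group `G` is normal or
has `p'`-order (for a fixed prime divisor `p` of `|G|`), then `G` is `q`-nilpotent
or `q`-closed for every prime divisor `q` of `|G|`. -/
theorem q_nilpotent_or_q_closed_of_maximal_normal_or_p'_order
    {G : Type*} [Group G] [Finite G] (p : ℕ) (hp : p.Prime)
    (hpG : p ∣ Nat.card G)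
    (h : ∀ M : Subgroup G, IsCoatom M → M.Normal ∨ ¬ p ∣ Nat.card M) :
    ∀ q : ℕ, q.Prime → q ∣ Nat.card G →
      (∃ N : Subgroup G, N.Normal ∧ ¬ q ∣ Nat.card N ∧ ∃ n : ℕ, N.index = q ^ n) ∨
        (∃ P : Sylow q G, (P : Subgroup G).Normal) := by
  haveI : Fact p.Prime := ⟨hp⟩
  obtain ⟨P⟩ := (inferInstance : Nonempty (Sylow p G))
  have hcardP : Nat.card (P : Subgroup G) = p ^ (Nat.card G).factorization p :=
    Sylow.card_eq_multiplicity P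
  have hpP : p ∣ Nat.card (P : Subgroup G) := by
    rw [hcardP]
    exact dvd_pow_self p (Nat.Prime.factorization_pos_of_dvd hp Nat.card_pos.ne' hpG).ne'
  -- Step 1: P is normal in G
  haveI hPn : (P : Subgroup G).Normal := by
    by_contra hQ
    have h1 : Subgroup.normalizer ((P : Subgroup G) : Set G) ≠ ⊤ := fun ht =>
      hQ (Subgroup.normalizer_eq_top_iff.mp ht)
    rcases eq_top_or_exists_le_coatom (Subgroup.normalizer ((P : Subgroup G) : Set G)) with ht | ⟨M, hM, hle⟩
    · exact h1 ht
    · have hPM : (P : Subgroup G) ≤ M := le_trans Subgroup.le_normalizer hle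
      have hpm : p ∣ Nat.card M := dvd_trans hpP (Subgroup.card_dvd_of_le hPM)
      haveI : M.Normal := (h M hM).resolve_right (fun hc => hc hpm)
      have := Sylow.normalizer_sup_eq_top' (N := M) P hPM
      rw [← Sylow.coe_coe, sup_eq_right.mpr hle] at this
      exact hM.1 this
  intro q hq hqG
  by_cases hqp : q = p
  · subst hqp
    exact Or.inr ⟨P, hPn⟩
  · -- q ≠ p: use the quotient G ⧸ P
    left
    have hsurj : Function.Surjective (QuotientGroup.mk' (P : Subgroup G)) :=
      QuotientGroup.mk'_surjective _
    -- every coatom of G ⧸ P is normal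
    have hn' : ∀ M : Subgroup (G ⧸ (P : Subgroup G)), IsCoatom M → M.Normal := by
      intro M' hM'
      have hco : IsCoatom (M'.comap (QuotientGroup.mk' (P : Subgroup G))) :=
        isCoatom_comap_of_surjective hsurj hM'
      have hker : (P : Subgroup G) ≤ M'.comap (QuotientGroup.mk' (P : Subgroup G)) :=
        fun x hx => Subgroup.mem_comap.mpr (by
          rw [show (QuotientGroup.mk' (P : Subgroup G)) x = 1 from
            (QuotientGroup.eq_one_iff x).mpr hx]
          exact M'.one_mem)
      have hpm : p ∣ Nat.card (M'.comap (QuotientGroup.mk' (P : Subgroup G))) :=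
        dvd_trans hpP (Subgroup.card_dvd_of_le hker)
      have hNor := (h _ hco).resolve_right (fun hc => hc hpm)
      have hmap := Subgroup.Normal.map hNor (QuotientGroup.mk' (P : Subgroup G)) hsurj
      rwa [Subgroup.map_comap_eq_self_of_surjective hsurj M'] at hmap
    obtain ⟨K', hK'n, hK'c, m, hK'i⟩ := exists_q_complement hq
      (Nat.card (G ⧸ (P : Subgroup G))) (G ⧸ (P : Subgroup G))
      inferInstance inferInstance le_rfl hn'
    refine ⟨K'.comap (QuotientGroup.mk' (P : Subgroup G)),
      Subgroup.Normal.comap hK'n _, ?_, m, ?_⟩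
    · apply not_dvd_card_comap _ hq _ hK'c
      rw [QuotientGroup.ker_mk']
      intro hdvd
      rw [hcardP] at hdvd
      exact hqp ((Nat.prime_dvd_prime_iff_eq hq hp).mp (hq.dvd_of_dvd_pow hdvd))
    · rw [Subgroup.index_comap_of_surjective _ hsurj, hK'i]
end

section
/- Let G be a finite group and p a prime divisor of the order of G. If every maximal subgroup of G is normal in G or has p'-order, then every Sylow p-subgroup of G is normal in G. -/
/-- If every maximal subgroup of a finite group `G` is normal or has `p'`-order
(for a fixed prime divisor `p` of `|G|`), then every Sylow `p`-subgroup of `G` is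
normal. -/
theorem sylow_p_normal_of_maximal_normal_or_p'_order
    {G : Type*} [Group G] [Finite G] (p : ℕ) (hp : p.Prime)
    (hpG : p ∣ Nat.card G)
    (h : ∀ M : Subgroup G, IsCoatom M → M.Normal ∨ ¬ p ∣ Nat.card M) :
    ∀ P : Sylow p G, (P : Subgroup G).Normal := by
  have : Fact p.Prime := ⟨hp⟩
  intro P
  rw [← Subgroup.normalizer_eq_top_iff]
  by_contra hn
  obtain ⟨M, hM, hle⟩ := (eq_top_or_exists_le_coatom (Subgroup.normalizer ((P : Subgroup G) : Set G))).resolve_left hn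
  have hPM : (P : Subgroup G) ≤ M := le_trans Subgroup.le_normalizer hle
  have hpM : p ∣ Nat.card M := by
    have := Nat.card_le_card_of_injective _ (Subgroup.inclusion_injective hPM)
    have hcard : p ∣ Nat.card (P : Subgroup G) := by
      rw [Sylow.card_eq_multiplicity]
      exact dvd_pow_self p (Nat.Prime.factorization_pos_of_dvd hp (Nat.card_pos.ne') hpG).ne'
    exact hcard.trans (Subgroup.card_dvd_of_le hPM)
  have hMnorm : M.Normal := (h M hM).resolve_right (fun hc => hc hpM)
  have := Sylow.normalizer_sup_eq_top' P hPM
  rw [sup_eq_right.mpr (show Subgroup.normalizer (P : Set G) ≤ M from hle)] at this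
  exact hM.1 this
end

section
/- Let G be a finite group, p a prime, and N a normal subgroup of G. If every maximal subgroup of G is nilpotent or is normal in G or has p'-order, then every maximal subgroup of the quotient group G/N is nilpotent or is normal in G/N or has p'-order. -/
/-- The hypothesis "every maximal subgroup is nilpotent or normal or has
`p'`-order" is inherited by quotient groups. -/
theorem quotient_inherits_maximal_nilpotent_or_normal_or_p'_order
    {G : Type*} [Group G] [Finite G] (p : ℕ) (hp : p.Prime)
    (N : Subgroup G) [N.Normal]
    (h : ∀ M : Subgroup G, IsCoatom M →
      Group.IsNilpotent ↥M ∨ M.Normal ∨ ¬ p ∣ Nat.card M) :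
    ∀ M : Subgroup (G ⧸ N), IsCoatom M →
      Group.IsNilpotent ↥M ∨ M.Normal ∨ ¬ p ∣ Nat.card M := by
  intro M hM
  set φ := QuotientGroup.mk' N with hφdef
  have hφ : Function.Surjective φ := QuotientGroup.mk'_surjective N
  have hco : IsCoatom (M.comap φ) := Subgroup.isCoatom_comap_of_surjective hφ hM
  have hmap : (M.comap φ).map φ = M := Subgroup.map_comap_eq_self_of_surjective hφ M
  have hsurj : Function.Surjective (φ.subgroupMap (M.comap φ)) :=
    φ.subgroupMap_surjective (M.comap φ)
  rcases h (M.comap φ) hco with hnil | hnorm | hcard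
  · left
    have : Group.IsNilpotent ↥((M.comap φ).map φ) :=
      nilpotent_of_surjective (φ.subgroupMap (M.comap φ)) hsurj
    rwa [hmap] at this
  · right; left
    rw [← hmap]
    exact Subgroup.Normal.map hnorm φ hφ
  · right; right
    intro hdvd
    apply hcard
    have : Nat.card ↥((M.comap φ).map φ) ∣ Nat.card ↥(M.comap φ) :=
      Subgroup.card_dvd_of_surjective _ hsurj
    rw [hmap] at this
    exact hdvd.trans this
end
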